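/- Let ⟨xₙ⟩_{n=1}^∞ be a sequence in ℕ and let A be an IP* set in (ℕ,+). Then there exists a sum subsystem ⟨yₙ⟩_{n=1}^∞ of ⟨xₙ⟩_{n=1}^∞ such that FS(⟨yₙ⟩_{n=1}^∞) ∪ FP(⟨yₙ⟩_{n=1}^∞) ⊆ A. -/

import Mathlib

/-- `FS x` is the set of all finite sums `∑_{t ∈ H} x t` over nonempty finite `H ⊆ ℕ`. -/
def FS (x : ℕ → ℕ) : Set ℕ :=
  {m | ∃ H : Finset ℕ, H.Nonempty ∧ m = ∑ t ∈ H, x t}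

/-- `FP x` is the set of all finite products `∏_{t ∈ H} x t` over nonempty finite `H ⊆ ℕ`. -/
def FP (x : ℕ → ℕ) : Set ℕ :=
  {m | ∃ H : Finset ℕ, H.Nonempty ∧ m = ∏ t ∈ H, x t}

/-- `A` is an IP* set in `(ℕ,+)`: it meets `FS z` for every sequence `z`. -/
def IsIPStar (A : Set ℕ) : Prop :=
  ∀ z : ℕ → ℕ, (A ∩ FS z).Nonempty

/-- `y` is a sum subsystem of `x`: there are nonempty finite sets `Hₙ` with
`max Hₙ < min Hₙ₊₁` and `yₙ = ∑_{t ∈ Hₙ} x t`. -/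
def IsSumSubsystem (y x : ℕ → ℕ) : Prop :=
  ∃ H : ℕ → Finset ℕ, ∃ hne : ∀ n, (H n).Nonempty,
    (∀ n, (H n).max' (hne n) < (H (n + 1)).min' (hne (n + 1))) ∧
    ∀ n, y n = ∑ t ∈ H n, x t

open Filter

attribute [local instance] Ultrafilter.add Ultrafilter.addSemigroup

namespace BH

/-- view a sequence as a stream -/
def str (x : ℕ → ℕ) : Stream' ℕ := x

theorem exists_good_ultrafilter (a : Stream' ℕ) :
    ∃ U : Ultrafilter ℕ, U + U = U ∧ ∀ n, ∀ᶠ m in U, m ∈ Hindman.FS (a.drop n) := by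
  let S : Set (Ultrafilter ℕ) := ⋂ n, { U | ∀ᶠ m in U, m ∈ Hindman.FS (a.drop n) }
  have h := exists_idempotent_in_compact_add_subsemigroup ?_ S ?_ ?_ ?_
  · rcases h with ⟨U, hU, U_idem⟩
    exact ⟨U, U_idem, fun n => Set.mem_iInter.mp hU n⟩
  · exact Ultrafilter.continuous_add_left
  · apply IsCompact.nonempty_iInter_of_sequence_nonempty_isCompact_isClosed
    · intro n U hU
      filter_upwards [hU]
      rw [← Stream'.drop_drop, ← Stream'.tail_eq_drop]
      exact Hindman.FS.tail' _
    · intro n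
      exact ⟨pure _, mem_pure.mpr <| Hindman.FS.head _⟩
    · exact (ultrafilter_isClosed_basic _).isCompact
    · intro n
      apply ultrafilter_isClosed_basic
  · exact IsClosed.isCompact (isClosed_iInter fun i => ultrafilter_isClosed_basic _)
  · intro U hU V hV
    rw [Set.mem_iInter] at *
    intro n
    rw [Set.mem_setOf_eq, Ultrafilter.eventually_add]
    filter_upwards [hU n] with m hm
    obtain ⟨n', hn⟩ := Hindman.FS.add hm
    filter_upwards [hV (n + n')] with m' hm'
    apply hn
    simpa only [Stream'.drop_drop] using hm'

variable (U : Ultrafilter ℕ)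

def DD (A : Set ℕ) : Set ℕ := {m | {k | m + k ∈ A} ∈ U}

theorem DD_mem (hU : U + U = U) {A : Set ℕ} (hA : A ∈ U) : DD U A ∈ U := by
  rw [← hU] at hA
  have : ∀ᶠ m in ↑(U + U), m ∈ A := hA
  rw [Ultrafilter.eventually_add] at this
  exact this

def star (A : Set ℕ) : Set ℕ := A ∩ DD U A

theorem star_subset (A : Set ℕ) : star U A ⊆ A := Set.inter_subset_left

theorem star_mem (hU : U + U = U) {A : Set ℕ} (hA : A ∈ U) : star U A ∈ U :=
  inter_mem hA (DD_mem U hU hA)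

theorem star_step (hU : U + U = U) {A : Set ℕ} {m : ℕ} (hm : m ∈ star U A) :
    {k | m + k ∈ star U A} ∈ U := by
  have h1 : {k | m + k ∈ A} ∈ U := hm.2
  have h2 : {k | m + k ∈ DD U A} ∈ U := by
    have : {k | m + k ∈ DD U A} = DD U {k | m + k ∈ A} := by
      ext k
      simp only [DD, Set.mem_setOf_eq, add_assoc]
    rw [this]
    exact DD_mem U hU h1
  have : {k | m + k ∈ star U A} = {k | m + k ∈ A} ∩ {k | m + k ∈ DD U A} := rfl
  rw [this]; exact inter_mem h1 h2

/-- finite sums (as Finset sums) lie in Hindman.FS -/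
theorem mem_hindman_FS (z : ℕ → ℕ) {m : ℕ} (hm : m ∈ FS z) : m ∈ Hindman.FS (str z) := by
  obtain ⟨H, hne, rfl⟩ := hm
  exact Hindman.FS.finset_sum (str z) H hne

theorem ipstar_mem (hU : U + U = U) {A : Set ℕ} (hA : IsIPStar A) : A ∈ U := by
  by_contra h
  have hc : Aᶜ ∈ U := Ultrafilter.compl_mem_iff_notMem.mpr h
  obtain ⟨b, hb⟩ := Hindman.exists_FS_of_large U hU _ hc
  obtain ⟨m, hmA, hmFS⟩ := hA b
  exact hb (mem_hindman_FS b hmFS) hmA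

theorem ipstar_mul {A : Set ℕ} (hA : IsIPStar A) (b : ℕ) : IsIPStar {m | b * m ∈ A} := by
  intro z
  obtain ⟨m, hmA, H, hne, rfl⟩ := hA (fun n => b * z n)
  refine ⟨∑ t ∈ H, z t, ?_, H, hne, rfl⟩
  simpa [Finset.mul_sum] using hmA

theorem FS_drop_exists (a : Stream' ℕ) {b : Stream' ℕ} {m : ℕ} (hm : m ∈ Hindman.FS b) :
    ∀ n, b = a.drop n → ∃ H : Finset ℕ, H.Nonempty ∧ (∀ t ∈ H, n ≤ t) ∧ m = ∑ t ∈ H, a t := by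
  induction hm with
  | head' b =>
    rintro n rfl
    exact ⟨{n}, Finset.singleton_nonempty n, by simp, by simp [Stream'.head_drop]; rfl⟩
  | tail' b m h ih =>
    rintro n rfl
    obtain ⟨H, hne, hge, rfl⟩ :=
      ih (n + 1) (by rw [Stream'.tail_eq_drop, Stream'.drop_drop, add_comm])
    exact ⟨H, hne, fun t ht => le_of_lt (Nat.lt_of_succ_le (hge t ht)), rfl⟩
  | cons' b m h ih =>
    rintro n rfl
    obtain ⟨H, hne, hge, rfl⟩ :=
      ih (n + 1) (by rw [Stream'.tail_eq_drop, Stream'.drop_drop, add_comm])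
    have hn : n ∉ H := fun hn => by simpa using hge n hn
    refine ⟨insert n H, Finset.insert_nonempty _ _, ?_, ?_⟩
    · intro t ht
      rcases Finset.mem_insert.mp ht with rfl | ht
      · exact le_refl t
      · exact le_of_lt (Nat.lt_of_succ_le (hge t ht))
    · erw [Finset.sum_insert hn, Stream'.head_drop]
      rfl

variable (x : ℕ → ℕ) (A : Set ℕ)

/-- bound strictly above all elements of all sets in `L` -/
def bnd (L : List (Finset ℕ)) : ℕ := (L.foldr (· ∪ ·) ∅).sup (· + 1)

theorem bnd_spec {L : List (Finset ℕ)} {Hi : Finset ℕ} (h : Hi ∈ L) :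
    ∀ t ∈ Hi, t < bnd L := by
  intro t ht
  have : t ∈ L.foldr (· ∪ ·) ∅ := by
    induction L with
    | nil => simp at h
    | cons hd tl ih =>
      rcases List.mem_cons.mp h with rfl | h'
      · exact Finset.mem_union_left _ ht
      · exact Finset.mem_union_right _ (ih h')
  exact Finset.le_sup (f := (· + 1)) this

def Good (L : List (Finset ℕ)) : Prop :=
  (∀ i, i < L.length → (L.getD i ∅).Nonempty) ∧
  (∀ i, i + 1 < L.length → ∀ s ∈ L.getD i ∅, ∀ t ∈ L.getD (i + 1) ∅, s < t) ∧
  (∀ K : Finset ℕ, K.Nonempty → (∀ i ∈ K, i < L.length) →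
    (∑ i ∈ K, ∑ t ∈ L.getD i ∅, x t) ∈ star U A ∧
    (∏ i ∈ K, ∑ t ∈ L.getD i ∅, x t) ∈ A)

theorem good_nil : Good U x A [] := by
  refine ⟨by simp, by simp, ?_⟩
  intro K hK hlt
  obtain ⟨i, hi⟩ := hK
  simpa using hlt i hi

theorem extend (hU : U + U = U)
    (hFS : ∀ n, {m | m ∈ Hindman.FS ((str x).drop n)} ∈ U)
    (hA : IsIPStar A)
    {L : List (Finset ℕ)} (hL : Good U x A L) :
    ∃ Hn : Finset ℕ, Hn.Nonempty ∧ (∀ t ∈ Hn, bnd L ≤ t) ∧ Good U x A (L ++ [Hn]) := by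
  classical
  set n := L.length with hn
  set w : ℕ → ℕ := fun i => ∑ t ∈ L.getD i ∅, x t with hw
  -- The middle set is U-large
  have hmid : ∀ᶠ k in (U : Filter ℕ), ∀ K ∈ (Finset.range n).powerset, K.Nonempty →
      ((∑ i ∈ K, w i) + k ∈ star U A ∧ (∏ i ∈ K, w i) * k ∈ A) := by
    rw [eventually_all_finset]
    intro K hK
    rcases K.eq_empty_or_nonempty with rfl | hKne
    · exact Eventually.of_forall (fun k h => absurd h (by simp))
    · have hlt : ∀ i ∈ K, i < n := fun i hi =>
        Finset.mem_range.mp (Finset.mem_powerset.mp hK hi)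
      obtain ⟨hsum, hprod⟩ := hL.2.2 K hKne hlt
      have h1 : {k | (∑ i ∈ K, w i) + k ∈ star U A} ∈ U := star_step U hU hsum
      have h2 : {k | (∏ i ∈ K, w i) * k ∈ A} ∈ U :=
        ipstar_mem U hU (ipstar_mul hA (∏ i ∈ K, w i))
      filter_upwards [h1, h2] with k hk1 hk2 _
      exact ⟨hk1, hk2⟩
  have hstar : star U A ∈ U := star_mem U hU (ipstar_mem U hU hA)
  have hT : (star U A ∩ {k | ∀ K ∈ (Finset.range n).powerset, K.Nonempty →
      ((∑ i ∈ K, w i) + k ∈ star U A ∧ (∏ i ∈ K, w i) * k ∈ A)} ∩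
      {m | m ∈ Hindman.FS ((str x).drop (bnd L))}) ∈ U :=
    inter_mem (inter_mem hstar hmid) (hFS (bnd L))
  obtain ⟨m, ⟨hmstar, hmmid⟩, hmFS⟩ := Ultrafilter.nonempty_of_mem hT
  obtain ⟨Hn, hHne, hHge, hmval⟩ := FS_drop_exists (str x) hmFS (bnd L) rfl
  have getD_lt : ∀ i, i < n → (L ++ [Hn]).getD i ∅ = L.getD i ∅ := by
    intro i hi
    exact List.getD_append _ _ _ _ hi
  have getD_last : (L ++ [Hn]).getD n ∅ = Hn := by
    rw [List.getD_append_right _ _ _ _ (le_refl _)]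
    simp
  have hmA : m ∈ A := star_subset U A hmstar
  refine ⟨Hn, hHne, hHge, ?_, ?_, ?_⟩
  · intro i hi
    simp only [List.length_append, List.length_singleton] at hi
    rcases Nat.lt_succ_iff_lt_or_eq.mp hi with hi | rfl
    · rw [getD_lt i hi]; exact hL.1 i hi
    · rw [getD_last]; exact hHne
  · intro i hi s hs t ht
    simp only [List.length_append, List.length_singleton] at hi
    rcases Nat.lt_succ_iff_lt_or_eq.mp hi with hi | hieq
    · rw [getD_lt i (by omega)] at hs
      rw [getD_lt (i + 1) hi] at ht
      exact hL.2.1 i hi s hs t ht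
    · have hipos : i + 1 = n := by omega
      rw [hipos, getD_last] at ht
      rw [getD_lt i (by omega)] at hs
      have hsmem : L.getD i ∅ ∈ L := by
        have hilen : i < L.length := by omega
        rw [List.getD_eq_getElem _ _ hilen]
        exact List.getElem_mem _
      exact lt_of_lt_of_le (bnd_spec hsmem s hs) (hHge t ht)
  · intro K hKne hKlt
    set W : ℕ → ℕ := fun i => ∑ t ∈ (L ++ [Hn]).getD i ∅, x t with hW
    have hKlt' : ∀ i ∈ K, i < n + 1 := by
      intro i hi
      have := hKlt i hi
      simpa using this
    have hWn : W n = m := by rw [hW]; simp only [getD_last]; exact hmval.symm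
    by_cases hnK : n ∈ K
    · have hWw : ∀ i ∈ K.erase n, W i = w i := by
        intro i hi
        have hilt : i < n := by
          have h1 := hKlt' i (Finset.mem_of_mem_erase hi)
          have h2 := Finset.ne_of_mem_erase hi
          omega
        rw [hW, hw]; simp only [getD_lt i hilt]
      have hsumK : ∑ i ∈ K, W i = (∑ i ∈ K.erase n, w i) + m := by
        rw [← Finset.sum_erase_add K W hnK, hWn, Finset.sum_congr rfl hWw]
      have hprodK : ∏ i ∈ K, W i = (∏ i ∈ K.erase n, w i) * m := by
        rw [← Finset.prod_erase_mul K W hnK, hWn, Finset.prod_congr rfl hWw]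
      rcases (K.erase n).eq_empty_or_nonempty with he | hne'
      · rw [hsumK, hprodK, he]
        simp only [Finset.sum_empty, Finset.prod_empty, zero_add, one_mul]
        exact ⟨hmstar, hmA⟩
      · have hKe : K.erase n ∈ (Finset.range n).powerset := by
          rw [Finset.mem_powerset]
          intro i hi
          rw [Finset.mem_range]
          have h1 := hKlt' i (Finset.mem_of_mem_erase hi)
          have h2 := Finset.ne_of_mem_erase hi
          omega
        obtain ⟨h1, h2⟩ := hmmid (K.erase n) hKe hne'
        rw [hsumK, hprodK]
        exact ⟨h1, h2⟩
    · have hKold : ∀ i ∈ K, i < n := by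
        intro i hi
        have := hKlt' i hi
        rcases Nat.lt_succ_iff_lt_or_eq.mp this with h | rfl
        · exact h
        · exact absurd hi hnK
      have hWw : ∀ i ∈ K, W i = w i := fun i hi => by
        rw [hW, hw]; simp only [getD_lt i (hKold i hi)]
      rw [Finset.sum_congr rfl hWw, Finset.prod_congr rfl hWw]
      exact hL.2.2 K hKne hKold

end BH

theorem ipstar_contains_FS_union_FP_of_sum_subsystem
    (x : ℕ → ℕ) (A : Set ℕ) (hA : IsIPStar A) :
    ∃ y : ℕ → ℕ, IsSumSubsystem y x ∧ FS y ∪ FP y ⊆ A := by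
  classical
  obtain ⟨U, hU, hFS'⟩ := BH.exists_good_ultrafilter (BH.str x)
  have hFS : ∀ n, {m | m ∈ Hindman.FS ((BH.str x).drop n)} ∈ U := fun n => hFS' n
  -- iteratively build the list of H's
  let seq : ∀ n : ℕ, {L : List (Finset ℕ) // BH.Good U x A L ∧ L.length = n} := fun n =>
    Nat.rec ⟨[], BH.good_nil U x A, rfl⟩
      (fun _ p =>
        ⟨p.1 ++ [Classical.choose (BH.extend U x A hU hFS hA p.2.1)],
         (Classical.choose_spec (BH.extend U x A hU hFS hA p.2.1)).2.2,
         by simp [p.2.2]⟩) n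
  have seq_succ : ∀ n, (seq (n + 1)).1 =
      (seq n).1 ++ [Classical.choose (BH.extend U x A hU hFS hA (seq n).2.1)] := fun n => rfl
  set H : ℕ → Finset ℕ := fun n => (seq (n + 1)).1.getD n ∅ with hH
  have stable : ∀ n m, n < m → (seq m).1.getD n ∅ = H n := by
    intro n m hm
    induction m with
    | zero => omega
    | succ m ih =>
      rcases Nat.lt_succ_iff_lt_or_eq.mp hm with h | rfl
      · rw [seq_succ m, List.getD_append _ _ _ _ (by rw [(seq m).2.2]; exact h), ih h]
      · rfl
  have hne : ∀ n, (H n).Nonempty := by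
    intro n
    have := (seq (n + 1)).2.1.1 n (by rw [(seq (n + 1)).2.2]; omega)
    exact this
  have hy : ∀ (n N : ℕ) (hlt : n < N), (seq N).1.getD n ∅ = H n := stable
  -- increasing
  have hinc : ∀ n, ∀ s ∈ H n, ∀ t ∈ H (n + 1), s < t := by
    intro n s hs t ht
    have h2 := (seq (n + 2)).2.1.2.1 n (by rw [(seq (n + 2)).2.2]; omega)
    rw [stable n (n + 2) (by omega), stable (n + 1) (n + 2) (by omega)] at h2
    exact h2 s hs t ht
  -- sums and products
  have hkey : ∀ K : Finset ℕ, K.Nonempty →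
      (∑ i ∈ K, ∑ t ∈ H i, x t) ∈ BH.star U A ∧ (∏ i ∈ K, ∑ t ∈ H i, x t) ∈ A := by
    intro K hK
    set N := K.max' hK + 1 with hN
    have hlt : ∀ i ∈ K, i < (seq N).1.length := by
      intro i hi
      rw [(seq N).2.2]
      exact Nat.lt_succ_of_le (K.le_max' i hi)
    have := (seq N).2.1.2.2 K hK hlt
    have hcongrS : ∑ i ∈ K, ∑ t ∈ (seq N).1.getD i ∅, x t = ∑ i ∈ K, ∑ t ∈ H i, x t :=
      Finset.sum_congr rfl fun i hi => by
        rw [stable i N (Nat.lt_succ_of_le (K.le_max' i hi))]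
    have hcongrP : ∏ i ∈ K, ∑ t ∈ (seq N).1.getD i ∅, x t = ∏ i ∈ K, ∑ t ∈ H i, x t :=
      Finset.prod_congr rfl fun i hi => by
        rw [stable i N (Nat.lt_succ_of_le (K.le_max' i hi))]
    rw [hcongrS, hcongrP] at this
    exact this
  refine ⟨fun n => ∑ t ∈ H n, x t, ⟨H, hne, ?_, fun n => rfl⟩, ?_⟩
  · intro n
    exact hinc n _ ((H n).max'_mem (hne n)) _ ((H (n + 1)).min'_mem (hne (n + 1)))
  · rintro m (⟨K, hK, rfl⟩ | ⟨K, hK, rfl⟩)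
    · exact BH.star_subset U A (hkey K hK).1
    · exact (hkey K hK).2
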